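/- Let F be an algebraically closed field of characteristic 0, k ≥ 2 an integer, and J ∈ M_n(F) a Jordan canonical form matrix with at least two Jordan blocks, exactly one of which corresponds to the eigenvalue 0. Then for every C ∈ M_n(F) there exist X₁, X₂ ∈ M_n(F) with C = X₁^k + J·X₂^k. -/

import Mathlib

open Polynomial Matrix

/-- The Jordan block of size `m` with eigenvalue `lam`. -/
def jordanBlock {F : Type*} [Zero F] [One F] (lam : F) (m : ℕ) :
    Matrix (Fin m) (Fin m) F :=
  Matrix.of fun i j => if i = j then lam else if (i : ℕ) + 1 = (j : ℕ) then 1 else 0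

section BinomialHelpers

lemma coeff_binq {F : Type*} [Field F] [CharZero F] (c : F) (N : ℕ) (j : ℕ) (hj : j < N) :
    (∑ i ∈ Finset.range N, Polynomial.C (Ring.choose c i) * X ^ i).coeff j = Ring.choose c j := by
  rw [Polynomial.finset_sum_coeff]
  rw [Finset.sum_eq_single j]
  · simp
  · intro b _ hbj; simp [Polynomial.coeff_C_mul, Polynomial.coeff_X_pow, hbj, Ne.symm hbj]
  · intro h; exact absurd (Finset.mem_range.mpr hj) h

lemma mul_binq_coeff {F : Type*} [Field F] [CharZero F] (c t : F) (N : ℕ) (p : F[X])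
    (hp : ∀ j < N, p.coeff j = Ring.choose t j) :
    ∀ j < N, (p * ∑ i ∈ Finset.range N, Polynomial.C (Ring.choose c i) * X ^ i).coeff j
      = Ring.choose (t + c) j := by
  intro j hj
  rw [Polynomial.coeff_mul, Ring.add_choose_eq j (Commute.all _ _)]
  refine Finset.sum_congr rfl ?_
  intro ij hij
  have h12 := Finset.HasAntidiagonal.mem_antidiagonal.mp hij
  have h1 : ij.1 < N := lt_of_le_of_lt (le_trans (Nat.le_add_right _ _) h12.le) hj
  have h2 : ij.2 < N := lt_of_le_of_lt (le_trans (Nat.le_add_left _ _) h12.le) hj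
  rw [hp _ h1, coeff_binq c N ij.2 h2]

/-- key binomial lemma: there is a polynomial `q` with `q ^ k ≡ 1 + X  mod X^N`. -/
lemma exists_binomial_root {F : Type*} [Field F] [CharZero F] (k N : ℕ) (hk : k ≠ 0) :
    ∃ q : F[X], (X : F[X]) ^ N ∣ q ^ k - (1 + X) := by
  set c : F := (k : F)⁻¹ with hc
  set q : F[X] := ∑ i ∈ Finset.range N, Polynomial.C (Ring.choose c i) * X ^ i with hq
  have key : ∀ m : ℕ, m ≠ 0 → ∀ j < N, (q ^ m).coeff j = Ring.choose ((m : F) * c) j := by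
    intro m
    induction m with
    | zero => intro h; exact absurd rfl h
    | succ m ih =>
      intro _ j hj
      rcases eq_or_ne m 0 with rfl | hm
      · rw [pow_one, coeff_binq c N j hj]
        norm_num
      · have := mul_binq_coeff c ((m : F) * c) N (q ^ m) (ih hm) j hj
        rw [pow_succ]
        rw [this]
        push_cast
        ring_nf
  refine ⟨q, ?_⟩
  rw [Polynomial.X_pow_dvd_iff]
  intro d hd
  have hkc : (k : F) * c = 1 := by
    have : (k:F) ≠ 0 := Nat.cast_ne_zero.mpr hk
    rw [hc]; field_simp
  rw [Polynomial.coeff_sub, key k hk d hd, hkc]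
  have h1 : Ring.choose (1 : F) d = ((Nat.choose 1 d : ℕ) : F) := by
    have := Ring.choose_natCast (R := F) 1 d
    simpa using this
  rw [h1]
  rcases d with _ | _ | d <;> simp [Polynomial.coeff_one, Polynomial.coeff_X, Nat.choose]

end BinomialHelpers

section RootLemma
variable {F : Type*} [Field F] [CharZero F] [IsAlgClosed F]
variable {m : Type*} [Fintype m] [DecidableEq m]

/-- every invertible matrix over an algebraically closed field of characteristic zero
has a `k`-th root, `k ≠ 0`. -/
lemma exists_pow_eq_of_isUnit (k : ℕ) (hk : k ≠ 0) (Y : Matrix m m F)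
    (hY : IsUnit Y.det) : ∃ X : Matrix m m F, X ^ k = Y := by
  classical
  cases isEmpty_or_nonempty m with
  | inl h => exact ⟨Y, Subsingleton.elim _ _⟩
  | inr hne =>
  have hint : IsIntegral F Y := IsIntegral.of_finite F Y
  set f : F[X] := minpoly F Y with hf
  have hf0 : f ≠ 0 := minpoly.ne_zero hint
  have hmon : f.Monic := minpoly.monic hint
  have hYinv : Y * Y⁻¹ = 1 := Matrix.mul_nonsing_inv Y hY
  have hYinv' : Y⁻¹ * Y = 1 := Matrix.nonsing_inv_mul Y hY
  -- X does not divide f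
  have hXf : ¬ (X : F[X]) ∣ f := by
    intro hdvd
    obtain ⟨h, hh⟩ := hdvd
    have h0 : Polynomial.aeval Y f = 0 := minpoly.aeval F Y
    rw [hh, _root_.map_mul, Polynomial.aeval_X] at h0
    have hhY : Polynomial.aeval Y h = 0 := by
      calc Polynomial.aeval Y h = Y⁻¹ * (Y * Polynomial.aeval Y h) := by
            rw [← mul_assoc, hYinv', one_mul]
        _ = 0 := by rw [h0, mul_zero]
    have hdvd2 := minpoly.dvd F Y hhY
    have hhne : h ≠ 0 := fun hz => hf0 (by rw [hh, hz, mul_zero])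
    have h1 : f.natDegree ≤ h.natDegree := Polynomial.natDegree_le_of_dvd hdvd2 hhne
    have h2 : h.natDegree < f.natDegree := by
      rw [hh]
      rw [Polynomial.natDegree_mul Polynomial.X_ne_zero hhne, Polynomial.natDegree_X]
      omega
    omega
  -- the roots of f are all nonzero
  have hroots0 : ∀ μ ∈ f.roots, μ ≠ 0 := by
    intro μ hμ h0
    subst h0
    have := Polynomial.dvd_iff_isRoot.mpr (Polynomial.isRoot_of_mem_roots hμ)
    rw [Polynomial.C_0, sub_zero] at this
    exact hXf this
  -- choose k-th roots of the roots
  have hrho : ∀ μ : F, ∃ ρ : F, ρ ^ k = μ := fun μ =>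
    IsAlgClosed.exists_pow_nat_eq μ (Nat.pos_of_ne_zero hk)
  set ρ : F → F := fun μ => Classical.choose (hrho μ) with hρ
  have hρk : ∀ μ : F, (ρ μ) ^ k = μ := fun μ => Classical.choose_spec (hrho μ)
  set E : Finset F := f.roots.toFinset with hE
  set t₀ : F[X] := Lagrange.interpolate E id ρ with ht₀
  have hinj : Set.InjOn id (E : Set F) := Function.injective_id.injOn
  have ht₀eval : ∀ μ ∈ E, t₀.eval μ = ρ μ := by
    intro μ hμ
    rw [ht₀]; exact Lagrange.eval_interpolate_at_node ρ hinj hμ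
  -- g := squarefree radical
  set g : F[X] := ∏ μ ∈ E, (X - Polynomial.C μ) with hg
  have hsplits : f.Splits := IsAlgClosed.splits f
  -- g divides t₀ ^ k - X
  have hgdvd : g ∣ t₀ ^ k - X := by
    refine Finset.prod_dvd_of_coprime ?_ ?_
    · intro μ hμ ν hν hμν
      exact (Polynomial.pairwise_coprime_X_sub_C Function.injective_id hμν)
    · intro μ hμ
      rw [Polynomial.dvd_iff_isRoot]
      simp [Polynomial.IsRoot, ht₀eval μ hμ, hρk]
  -- f divides g ^ d
  set d : ℕ := f.natDegree with hd
  have hfg : f ∣ g ^ d := by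
    have hfp : f = (Multiset.map (fun a => X - Polynomial.C a) f.roots).prod :=
      hsplits.eq_prod_roots_of_monic hmon
    rw [hg, ← Finset.prod_pow]
    calc f = (Multiset.map (fun a => X - Polynomial.C a) f.roots).prod := hfp
      _ = ∏ μ ∈ E, (X - Polynomial.C μ) ^ (f.roots.count μ) :=
          Finset.prod_multiset_map_count f.roots _
      _ ∣ ∏ μ ∈ E, (X - Polynomial.C μ) ^ d := by
          refine Finset.prod_dvd_prod_of_dvd _ _ ?_
          intro μ hμ
          refine pow_dvd_pow _ ?_
          exact le_trans (Multiset.count_le_card μ f.roots) (Polynomial.card_roots' f)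
  -- pass to the quotient ring
  set I : Ideal F[X] := Ideal.span {f} with hI
  set R := F[X] ⧸ I with hR
  set mk : F[X] →ₐ[F] R := Ideal.Quotient.mkₐ F I with hmk
  have hmkf : mk f = 0 := by
    rw [hmk, Ideal.Quotient.mkₐ_eq_mk, Ideal.Quotient.eq_zero_iff_mem, hI]
    exact Ideal.mem_span_singleton_self f
  set x : R := mk X with hx
  set u : R := mk t₀ with hu
  -- u ^ k - x is nilpotent
  have hnil : IsNilpotent (u ^ k - x) := by
    refine ⟨d, ?_⟩
    have : (u ^ k - x) ^ d = mk ((t₀ ^ k - X) ^ d) := by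
      rw [hu, hx]; push_cast [_root_.map_pow, _root_.map_sub]; ring
    rw [this]
    obtain ⟨c, hc⟩ := hfg.trans (pow_dvd_pow_of_dvd hgdvd d)
    rw [show (t₀ ^ k - X) ^ d = f * c from hc, _root_.map_mul, hmkf, zero_mul]
  -- x is a unit
  have hc0 : f.coeff 0 ≠ 0 := fun h => hXf (Polynomial.X_dvd_iff.mpr h)
  have hxu : IsUnit x := by
    have hXdiv : X * f.divX + Polynomial.C (f.coeff 0) = f := Polynomial.X_mul_divX_add f
    have hstep : x * mk f.divX = - mk (Polynomial.C (f.coeff 0)) := by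
      have := congrArg mk hXdiv
      rw [_root_.map_add, _root_.map_mul, hmkf] at this
      rw [hx]; linear_combination this
    have halg : ∀ c : F, mk (Polynomial.C c) = algebraMap F R c := by
      intro c
      rw [hmk, ← Polynomial.algebraMap_eq]
      exact (Ideal.Quotient.mkₐ F I).commutes c
    refine IsUnit.of_mul_eq_one (mk f.divX * (- algebraMap F R (f.coeff 0)⁻¹)) ?_
    have hcc : algebraMap F R (f.coeff 0) * algebraMap F R (f.coeff 0)⁻¹ = 1 := by
      rw [← _root_.map_mul, mul_inv_cancel₀ hc0, _root_.map_one]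
    calc x * (mk f.divX * (- algebraMap F R (f.coeff 0)⁻¹))
        = (x * mk f.divX) * (- algebraMap F R (f.coeff 0)⁻¹) := by ring
      _ = (- algebraMap F R (f.coeff 0)) * (- algebraMap F R (f.coeff 0)⁻¹) := by
          rw [hstep, halg]
      _ = 1 := by linear_combination hcc
  -- u ^ k is a unit, hence u is a unit
  have huk : IsUnit (u ^ k) := by
    have : u ^ k = x + (u ^ k - x) := by ring
    rw [this]
    exact IsNilpotent.isUnit_add_left_of_commute hnil hxu (Commute.all _ _)
  -- η
  set w : Rˣ := huk.unit with hw
  set η : R := (x - u ^ k) * ↑w⁻¹ with hη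
  have hηnil : IsNilpotent η := by
    have h1 : IsNilpotent (x - u ^ k) := by
      have h2 : x - u ^ k = -(u ^ k - x) := by ring
      rw [h2]
      exact hnil.neg
    exact (Commute.all (x - u ^ k) (↑w⁻¹ : R)).isNilpotent_mul_right h1
  obtain ⟨N, hN⟩ := hηnil
  obtain ⟨q, hq⟩ := exists_binomial_root (F := F) k N hk
  set V : R := Polynomial.aeval η q with hV
  have hVk : V ^ k = 1 + η := by
    obtain ⟨h, hh⟩ := hq
    have : q ^ k = (1 + X) + X ^ N * h := by linear_combination hh
    rw [hV, ← _root_.map_pow, this]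
    simp only [_root_.map_add, _root_.map_mul, _root_.map_pow, Polynomial.aeval_X, Polynomial.aeval_one]
    rw [hN, zero_mul, add_zero]
  -- (u * V) ^ k = x
  have hwspec : (w : R) = u ^ k := huk.unit_spec
  have hww : (w : R) * ↑w⁻¹ = 1 := w.mul_inv
  have hpow : (u * V) ^ k = x := by
    rw [mul_pow, hVk, hη]
    calc u ^ k * (1 + (x - u ^ k) * ↑w⁻¹)
        = u ^ k + (x - u ^ k) * ((w : R) * ↑w⁻¹) := by rw [hwspec]; ring
      _ = x := by rw [hww]; ring
  -- lift to a polynomial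
  obtain ⟨p, hp⟩ := Ideal.Quotient.mk_surjective (I := I) (u * V)
  have hmkp : mk p = u * V := by
    rw [hmk, Ideal.Quotient.mkₐ_eq_mk]; exact hp
  have hfdvd : f ∣ p ^ k - X := by
    have h0 : mk (p ^ k - X) = 0 := by
      rw [_root_.map_sub, _root_.map_pow, hmkp, hpow, hx, sub_self]
    rw [hmk, Ideal.Quotient.mkₐ_eq_mk, Ideal.Quotient.eq_zero_iff_mem, hI,
      Ideal.mem_span_singleton] at h0
    exact h0
  refine ⟨Polynomial.aeval Y p, ?_⟩
  obtain ⟨c, hc⟩ := hfdvd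
  have : Polynomial.aeval Y (p ^ k - X) = 0 := by
    rw [hc, _root_.map_mul, show Polynomial.aeval Y f = 0 from minpoly.aeval F Y, zero_mul]
  rw [_root_.map_sub, _root_.map_pow, Polynomial.aeval_X] at this
  exact sub_eq_zero.mp this

end RootLemma

section MatHelpers
set_option linter.unusedSectionVars false

variable {F : Type*} [Field F] {ι : Type*} [Fintype ι] [DecidableEq ι]

lemma mul_vecMulVec {κ : Type*} [Fintype κ] (A : Matrix ι κ F) (x : κ → F) (y : ι → F) :
    A * vecMulVec x y = vecMulVec (A *ᵥ x) y := by
  ext i j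
  simp [Matrix.mul_apply, vecMulVec_apply, Matrix.mulVec, dotProduct,
    Finset.sum_mul, mul_assoc]

lemma vecMulVec_mul {κ : Type*} [Fintype κ] (x : ι → F) (y : κ → F) (A : Matrix κ ι F) :
    vecMulVec x y * A = vecMulVec x (y ᵥ* A) := by
  ext i j
  simp [Matrix.mul_apply, vecMulVec_apply, Matrix.vecMul, dotProduct,
    Finset.mul_sum, mul_assoc]

lemma vecMulVec_mulVec (x : ι → F) (y : ι → F) (w : ι → F) :
    vecMulVec x y *ᵥ w = (y ⬝ᵥ w) • x := by
  ext i
  simp [vecMulVec_apply, Matrix.mulVec, dotProduct, Finset.mul_sum, mul_assoc,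
    mul_comm, mul_left_comm]

lemma vecMul_vecMulVec (x : ι → F) (y : ι → F) (w : ι → F) :
    w ᵥ* vecMulVec x y = (w ⬝ᵥ x) • y := by
  ext i
  simp [vecMulVec_apply, Matrix.vecMul, dotProduct, Finset.sum_mul, mul_assoc]

lemma smul_vecMulVec (c : F) (x : ι → F) (y : ι → F) :
    vecMulVec (c • x) y = c • vecMulVec x y := by
  ext i j
  simp [vecMulVec_apply, mul_assoc]

lemma pow_scalar_add (a b τ : F) (hτ : τ ≠ 0) (R : Matrix ι ι F) (hR : R * R = τ • R) :
    ∀ j : ℕ, (a • (1 : Matrix ι ι F) + b • R) ^ j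
      = a ^ j • (1 : Matrix ι ι F) + (((a + b * τ) ^ j - a ^ j) / τ) • R := by
  intro j
  induction j with
  | zero => simp
  | succ j ih =>
    rw [pow_succ, ih]
    have expand : (a ^ j • (1 : Matrix ι ι F) + (((a + b * τ) ^ j - a ^ j) / τ) • R)
        * (a • 1 + b • R)
        = (a ^ j * a) • (1 : Matrix ι ι F)
          + (a ^ j * b + (((a + b * τ) ^ j - a ^ j) / τ) * a
             + (((a + b * τ) ^ j - a ^ j) / τ) * (b * τ)) • R := by
      rw [add_mul, mul_add, mul_add, smul_mul_assoc, smul_mul_assoc, smul_mul_assoc,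
        smul_mul_assoc, mul_smul_comm, mul_smul_comm, mul_smul_comm, mul_smul_comm,
        one_mul, mul_one, hR]
      simp only [smul_smul]
      rw [add_smul, add_smul, ← add_assoc]
      simp only [Matrix.one_mul]
      abel
    rw [expand]
    congr 1
    · rw [pow_succ]
    · congr 1
      field_simp
      ring

end MatHelpers

section JordanHelpers
variable {F : Type*} [Field F]

lemma jordanBlock_triangular (lam : F) (m : ℕ) :
    (jordanBlock lam m).BlockTriangular id := by
  intro i j hij
  simp only [id] at hij
  unfold jordanBlock
  simp only [Matrix.of_apply]
  rw [if_neg, if_neg]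
  · omega
  · exact fun h => absurd h (ne_of_gt hij)

lemma jordanBlock_det (lam : F) (m : ℕ) : (jordanBlock lam m).det = lam ^ m := by
  rw [Matrix.det_of_upperTriangular (jordanBlock_triangular lam m)]
  have : ∀ i : Fin m, jordanBlock lam m i i = lam := by
    intro i; unfold jordanBlock; simp
  rw [Finset.prod_congr rfl (fun i _ => this i)]
  simp

lemma jordanBlock_zero_apply (m : ℕ) (i j : Fin m) :
    jordanBlock (0 : F) m i j = if (i : ℕ) + 1 = (j : ℕ) then 1 else 0 := by
  unfold jordanBlock
  simp only [Matrix.of_apply]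
  by_cases h : i = j
  · subst h; simp
  · simp [h]

lemma jordanBlock_zero_mul_transpose (m : ℕ) :
    jordanBlock (0 : F) m * (jordanBlock (0 : F) m)ᵀ
      = 1 - Matrix.of (fun a b : Fin m =>
          if (a : ℕ) = m - 1 ∧ (b : ℕ) = m - 1 then (1 : F) else 0) := by
  ext a b
  rw [Matrix.mul_apply]
  simp only [Matrix.transpose_apply, jordanBlock_zero_apply, Matrix.sub_apply,
    Matrix.one_apply, Matrix.of_apply]
  have hterm : ∀ l : Fin m,
      (if (a : ℕ) + 1 = (l : ℕ) then (1:F) else 0) * (if (b : ℕ) + 1 = (l : ℕ) then 1 else 0)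
      = if (l : ℕ) = (a : ℕ) + 1 ∧ (a : ℕ) = (b : ℕ) then 1 else 0 := by
    intro l
    by_cases h1 : (a : ℕ) + 1 = (l : ℕ)
    · by_cases h2 : (b : ℕ) + 1 = (l : ℕ)
      · rw [if_pos h1, if_pos h2, if_pos ⟨by omega, by omega⟩]; ring
      · rw [if_pos h1, if_neg h2, if_neg (by rintro ⟨hu, hw⟩; omega)]; ring
    · rw [if_neg h1, zero_mul, if_neg (by rintro ⟨hu, hw⟩; omega)]
  rw [Finset.sum_congr rfl (fun l _ => hterm l)]
  by_cases hab : (a : ℕ) = (b : ℕ)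
  · have hab' : a = b := Fin.ext hab
    subst hab'
    by_cases hlast : (a : ℕ) + 1 < m
    · rw [Finset.sum_eq_single (⟨(a : ℕ) + 1, hlast⟩ : Fin m)]
      · have hne : ¬((a : ℕ) = m - 1 ∧ (a : ℕ) = m - 1) := by
          have := a.isLt; omega
        rw [if_pos ⟨rfl, rfl⟩, if_pos rfl, if_neg hne, sub_zero]
      · intro l _ hl
        rw [if_neg]
        rintro ⟨hu, -⟩
        exact hl (Fin.ext hu)
      · intro h; exact absurd (Finset.mem_univ _) h
    · have h1 : (a : ℕ) = m - 1 := by have := a.isLt; omega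
      rw [Finset.sum_eq_zero, if_pos rfl, if_pos ⟨h1, h1⟩]
      · ring
      · intro l _
        rw [if_neg]
        rintro ⟨hl, -⟩
        have := l.isLt
        omega
  · have hab' : a ≠ b := fun h => hab (congrArg _ h)
    rw [Finset.sum_eq_zero, if_neg hab', if_neg]
    · ring
    · rintro ⟨h1, h2⟩; omega
    · intro l _
      rw [if_neg]
      rintro ⟨-, h⟩; exact hab h

end JordanHelpers

set_option maxHeartbeats 1000000 in
/-- If `J` is a Jordan canonical form with at least two Jordan blocks, exactly one
of which has eigenvalue `0`, then every `C` can be written as `X₁^k + J X₂^k`. -/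
theorem stmt_8 {F : Type*} [Field F] [DecidableEq F] [IsAlgClosed F] [CharZero F] {n r : ℕ}
    (k : ℕ) (hk : 2 ≤ k)
    (sz : Fin r → ℕ) (hsz : ∀ i, 0 < sz i) (lam : Fin r → F)
    (hr : 2 ≤ r)
    (hone : (Finset.univ.filter (fun i : Fin r => lam i = 0)).card = 1)
    (e : (Σ i : Fin r, Fin (sz i)) ≃ Fin n)
    (J : Matrix (Fin n) (Fin n) F)
    (hJ : J = Matrix.reindex e e
      (Matrix.blockDiagonal' (fun i => jordanBlock (lam i) (sz i))))
    (C : Matrix (Fin n) (Fin n) F) :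
    ∃ X₁ X₂ : Matrix (Fin n) (Fin n) F, C = X₁ ^ k + J * X₂ ^ k := by
  classical
  have hkpos : 0 < k := by omega
  -- the unique block with zero eigenvalue
  obtain ⟨i₀, hi₀⟩ := Finset.card_eq_one.mp hone
  have hlam0 : lam i₀ = 0 := by
    have h : i₀ ∈ Finset.univ.filter (fun i : Fin r => lam i = 0) := by
      rw [hi₀]; exact Finset.mem_singleton_self i₀
    simpa using h
  have hlamne : ∀ i : Fin r, i ≠ i₀ → lam i ≠ 0 := by
    intro i hi hz
    have h : i ∈ ({i₀} : Finset (Fin r)) := by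
      rw [← hi₀]; simp [hz]
    exact hi (Finset.mem_singleton.mp h)
  have hm₀pos : 0 < sz i₀ := hsz i₀
  set σu : (Σ i : Fin r, Fin (sz i)) := ⟨i₀, ⟨0, hm₀pos⟩⟩ with hσu
  set σv : (Σ i : Fin r, Fin (sz i)) := ⟨i₀, ⟨sz i₀ - 1, by omega⟩⟩ with hσv
  set u : Fin n → F := Pi.single (e σu) 1 with hudef
  set v : Fin n → F := Pi.single (e σv) 1 with hvdef
  set g : ∀ i : Fin r, Matrix (Fin (sz i)) (Fin (sz i)) F :=
    fun i => if lam i = 0 then (jordanBlock (lam i) (sz i))ᵀ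
      else (jordanBlock (lam i) (sz i))⁻¹ with hgdef
  set G : Matrix (Fin n) (Fin n) F := Matrix.reindex e e (Matrix.blockDiagonal' g) with hGdef
  -- coordinates of u, v
  have hva : ∀ s : Σ i : Fin r, Fin (sz i), v (e s) = if s = σv then 1 else 0 := by
    intro s
    rw [hvdef, Pi.single_apply]
    simp only [EmbeddingLike.apply_eq_iff_eq]
  have hua : ∀ s : Σ i : Fin r, Fin (sz i), u (e s) = if s = σu then 1 else 0 := by
    intro s
    rw [hudef, Pi.single_apply]
    simp only [EmbeddingLike.apply_eq_iff_eq]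
  -- block product identity
  have hblock : ∀ i : Fin r, jordanBlock (lam i) (sz i) * g i
      = 1 - (if i = i₀ then Matrix.of (fun a b : Fin (sz i) =>
          if (a : ℕ) = sz i - 1 ∧ (b : ℕ) = sz i - 1 then (1 : F) else 0) else 0) := by
    intro i
    by_cases hi : i = i₀
    · subst hi
      simp only [hgdef, hlam0, eq_self_iff_true, if_true]
      rw [jordanBlock_zero_mul_transpose]
    · have hdet : IsUnit (jordanBlock (lam i) (sz i)).det := by
        rw [jordanBlock_det]
        exact isUnit_iff_ne_zero.mpr (pow_ne_zero _ (hlamne i hi))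
      simp only [hgdef, if_neg (hlamne i hi)]
      rw [Matrix.mul_nonsing_inv _ hdet, if_neg hi, sub_zero]
  -- J * G = 1 - v vᵀ
  have hJG : J * G = 1 - vecMulVec v v := by
    rw [hJ, hGdef, Matrix.reindex_apply, Matrix.reindex_apply, Matrix.submatrix_mul_equiv,
      ← Matrix.blockDiagonal'_mul]
    ext p q
    obtain ⟨s, rfl⟩ : ∃ s, e s = p := ⟨e.symm p, e.apply_symm_apply p⟩
    obtain ⟨t, rfl⟩ : ∃ t, e t = q := ⟨e.symm q, e.apply_symm_apply q⟩
    rw [Matrix.submatrix_apply, Equiv.symm_apply_apply, Equiv.symm_apply_apply,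
      Matrix.sub_apply, Matrix.one_apply, vecMulVec_apply, hva s, hva t]
    simp only [EmbeddingLike.apply_eq_iff_eq]
    obtain ⟨i, a⟩ := s
    obtain ⟨j, b⟩ := t
    by_cases hij : i = j
    · subst hij
      rw [Matrix.blockDiagonal'_apply_eq, hblock i]
      by_cases hii : i = i₀
      · subst hii
        rw [if_pos rfl, Matrix.sub_apply, Matrix.one_apply, Matrix.of_apply]
        simp only [hσv, Sigma.mk.inj_iff, heq_eq_eq, true_and, Fin.ext_iff, Fin.val_mk]
        congr 1
        by_cases h1 : (a : ℕ) = sz i - 1 <;> by_cases h2 : (b : ℕ) = sz i - 1 <;>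
          simp [h1, h2]
      · rw [if_neg hii, sub_zero, Matrix.one_apply]
        have e2 : ¬((⟨i, a⟩ : Σ i : Fin r, Fin (sz i)) = σv) := by
          intro hc
          exact hii (congrArg Sigma.fst hc)
        rw [if_neg e2, zero_mul, sub_zero]
        simp only [Sigma.mk.inj_iff, heq_eq_eq, true_and]
    · rw [Matrix.blockDiagonal'_apply_ne _ _ _ hij]
      have e1 : ¬((⟨i, a⟩ : Σ i : Fin r, Fin (sz i)) = ⟨j, b⟩) := by
        intro hc
        exact hij (congrArg Sigma.fst hc)
      rw [if_neg e1]
      by_cases hii : i = i₀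
      · subst hii
        have e3 : ¬((⟨j, b⟩ : Σ i : Fin r, Fin (sz i)) = σv) := by
          intro hc
          exact hij (congrArg Sigma.fst hc).symm
        rw [if_neg e3, mul_zero, sub_zero]
      · have e2 : ¬((⟨i, a⟩ : Σ i : Fin r, Fin (sz i)) = σv) := by
          intro hc
          exact hii (congrArg Sigma.fst hc)
        rw [if_neg e2, zero_mul, sub_zero]
  -- J *ᵥ u = 0
  have hJu : J *ᵥ u = 0 := by
    ext p
    have h1 : (J *ᵥ u) p = J p (e σu) := by
      rw [hudef]
      simp [Matrix.mulVec, dotProduct, Pi.single_apply]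
    rw [h1, hJ, Matrix.reindex_apply, Matrix.submatrix_apply, Equiv.symm_apply_apply]
    obtain ⟨s, rfl⟩ : ∃ s, e s = p := ⟨e.symm p, e.apply_symm_apply p⟩
    rw [Equiv.symm_apply_apply]
    obtain ⟨i, a⟩ := s
    by_cases hi : i = i₀
    · subst hi
      rw [hσu, Matrix.blockDiagonal'_apply_eq, hlam0, jordanBlock_zero_apply]
      simp
    · rw [hσu, Matrix.blockDiagonal'_apply_ne _ _ _ hi]
      simp
  -- scalar setup
  set w : Fin n → F := v ᵥ* C with hwdef
  set β₀ : F := w ⬝ᵥ v with hβdef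
  have hvv : v ⬝ᵥ v = 1 := by
    rw [hvdef]
    simp [dotProduct, Pi.single_apply]
  -- choice of α
  set bads : Finset F := insert (0 : F) (insert β₀ (Matrix.charpoly C).roots.toFinset)
    with hbads
  obtain ⟨α, hα⟩ := Infinite.exists_notMem_finset bads
  have hα0 : α ≠ 0 := fun h => hα (by rw [hbads, h]; simp)
  have hαβ : α ≠ β₀ := fun h => hα (by rw [hbads, h]; simp)
  have hn1 : Nonempty (Fin n) := ⟨e σu⟩
  have hcharp : ∀ t : F, (Matrix.charpoly C).eval t
      = (t • (1 : Matrix (Fin n) (Fin n) F) - C).det := by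
    intro t
    rw [Matrix.charpoly, eval_det, Matrix.matPolyEquiv_charmatrix]
    congr 1
    rw [eval_sub, eval_X, eval_C]
    congr 1
    ext i j
    by_cases hij : i = j <;>
      simp [Matrix.scalar_apply, Matrix.diagonal, hij, Matrix.one_apply, Matrix.smul_apply]
  have hαdet : IsUnit (C - α • (1 : Matrix (Fin n) (Fin n) F)).det := by
    have hroot : ¬ (Matrix.charpoly C).IsRoot α := by
      intro hroot
      apply hα
      rw [hbads]
      have hne : Matrix.charpoly C ≠ 0 := (Matrix.charpoly_monic C).ne_zero
      refine Finset.mem_insert.mpr (Or.inr (Finset.mem_insert.mpr (Or.inr ?_)))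
      rw [Multiset.mem_toFinset, Polynomial.mem_roots']
      exact ⟨hne, hroot⟩
    rw [isUnit_iff_ne_zero]
    intro hdet
    apply hroot
    show (Matrix.charpoly C).eval α = 0
    rw [hcharp α, ← neg_sub C (α • 1), Matrix.det_neg, hdet, mul_zero]
  set W : Matrix (Fin n) (Fin n) F := (C - α • 1)⁻¹ with hWdef
  have hW2 : W * (C - α • 1) = 1 := Matrix.nonsing_inv_mul _ hαdet
  -- main objects
  set z : Fin n → F := w - α • v with hzdef
  set τ : F := β₀ - α with hτdef
  have hτ : τ ≠ 0 := by rw [hτdef]; exact sub_ne_zero.mpr (Ne.symm hαβ)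
  have hzv : z ⬝ᵥ v = τ := by
    rw [hzdef, hτdef, sub_dotProduct, smul_dotProduct, hvv]
    simp [hβdef]
  set R : Matrix (Fin n) (Fin n) F := vecMulVec v z with hRdef
  have hRR : R * R = τ • R := by
    rw [hRdef, _root_.vecMulVec_mul, _root_.vecMul_vecMulVec, hzv]
    ext i j
    simp [vecMulVec_apply, Pi.smul_apply, Matrix.smul_apply]
    ring
  obtain ⟨a, ha⟩ := IsAlgClosed.exists_pow_nat_eq α hkpos
  obtain ⟨dd, hdd⟩ := IsAlgClosed.exists_pow_nat_eq β₀ hkpos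
  set b : F := (dd - a) / τ with hbdef
  set M : Matrix (Fin n) (Fin n) F := α • 1 + R with hMdef
  set X₁ : Matrix (Fin n) (Fin n) F := a • 1 + b • R with hX₁def
  have hX₁k : X₁ ^ k = M := by
    rw [hX₁def, pow_scalar_add a b τ hτ R hRR k]
    have hab : a + b * τ = dd := by
      rw [hbdef]; field_simp; ring
    rw [hab, hdd, ha, ← hτdef, div_self hτ, one_smul, hMdef]
  -- linearity helpers
  have hsubvm : ∀ (A B : Matrix (Fin n) (Fin n) F) (x : Fin n → F),
      x ᵥ* (A - B) = x ᵥ* A - x ᵥ* B := by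
    intro A B x
    ext j
    simp [Matrix.vecMul, dotProduct, Matrix.sub_apply, mul_sub,
      Finset.sum_sub_distrib]
  have haddvm : ∀ (A B : Matrix (Fin n) (Fin n) F) (x : Fin n → F),
      x ᵥ* (A + B) = x ᵥ* A + x ᵥ* B := by
    intro A B x
    ext j
    simp [Matrix.vecMul, dotProduct, Matrix.add_apply, mul_add,
      Finset.sum_add_distrib]
  have hsm1 : ∀ (c : F) (x : Fin n → F),
      x ᵥ* (c • (1 : Matrix (Fin n) (Fin n) F)) = c • x := by
    intro c x
    ext j
    simp [Matrix.vecMul, dotProduct, Matrix.smul_apply, Matrix.one_apply,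
      mul_comm]
  have hvM : v ᵥ* M = w := by
    rw [hMdef, haddvm, hsm1]
    have h2 : v ᵥ* R = z := by
      rw [hRdef, _root_.vecMul_vecMulVec, hvv, one_smul]
    rw [h2, hzdef]
    abel
  set Z : Matrix (Fin n) (Fin n) F := C - M with hZdef
  have hvZ : v ᵥ* Z = 0 := by
    rw [hZdef, hsubvm, hvM, hwdef, sub_self]
  set Y : Matrix (Fin n) (Fin n) F := G * Z + vecMulVec u z with hYdef
  have hJY : J * Y = Z := by
    rw [hYdef, Matrix.mul_add, ← Matrix.mul_assoc, hJG, Matrix.sub_mul, Matrix.one_mul,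
      _root_.vecMulVec_mul, hvZ, _root_.mul_vecMulVec, hJu]
    have h1 : vecMulVec v (0 : Fin n → F) = 0 := by
      ext i j; simp [vecMulVec_apply]
    have h2 : vecMulVec (0 : Fin n → F) z = 0 := by
      ext i j; simp [vecMulVec_apply]
    rw [h1, h2, sub_zero, add_zero]
  have hYdet : IsUnit Y.det := by
    rw [isUnit_iff_ne_zero]
    intro h0
    obtain ⟨x, hx0, hx⟩ := Matrix.exists_mulVec_eq_zero_iff.mpr h0
    have hZx : Z *ᵥ x = 0 := by
      calc Z *ᵥ x = (J * Y) *ᵥ x := by rw [hJY]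
        _ = J *ᵥ (Y *ᵥ x) := (Matrix.mulVec_mulVec x J Y).symm
        _ = 0 := by rw [hx, Matrix.mulVec_zero]
    have hfact : (C - α • 1) *ᵥ x = (z ⬝ᵥ x) • v := by
      have hZ2 : Z = (C - α • 1) - R := by rw [hZdef, hMdef]; abel
      rw [hZ2, Matrix.sub_mulVec] at hZx
      have h3 : R *ᵥ x = (z ⬝ᵥ x) • v := by rw [hRdef, _root_.vecMulVec_mulVec]
      rw [h3] at hZx
      exact sub_eq_zero.mp hZx
    have hxWv : x = (z ⬝ᵥ x) • (W *ᵥ v) := by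
      calc x = (1 : Matrix (Fin n) (Fin n) F) *ᵥ x := (Matrix.one_mulVec x).symm
        _ = (W * (C - α • 1)) *ᵥ x := by rw [hW2]
        _ = W *ᵥ ((C - α • 1) *ᵥ x) := (Matrix.mulVec_mulVec x W _).symm
        _ = W *ᵥ ((z ⬝ᵥ x) • v) := by rw [hfact]
        _ = (z ⬝ᵥ x) • (W *ᵥ v) := by rw [Matrix.mulVec_smul]
    have hYx : Y *ᵥ x = (z ⬝ᵥ x) • u := by
      rw [hYdef, Matrix.add_mulVec]
      have h1 : (G * Z) *ᵥ x = 0 := by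
        rw [← Matrix.mulVec_mulVec, hZx, Matrix.mulVec_zero]
      rw [h1, zero_add, _root_.vecMulVec_mulVec]
    have hzx : z ⬝ᵥ x = 0 := by
      have h3 : (z ⬝ᵥ x) • u = 0 := by rw [← hYx, hx]
      have h4 := congrFun h3 (e σu)
      rw [Pi.smul_apply, hua σu, if_pos rfl] at h4
      simpa using h4
    exact hx0 (by rw [hxWv, hzx, zero_smul])
  obtain ⟨X₂, hX₂⟩ := exists_pow_eq_of_isUnit k (by omega) Y hYdet
  refine ⟨X₁, X₂, ?_⟩
  rw [hX₁k, hX₂, hJY, hZdef]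
  abel
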